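/- Let n ≥ 1, let M : ℂ → ℂ^{n×n} be a function, let σ, μ, μ₊ ∈ ℂ with μ₊ ≠ μ, suppose S := M(σ) is invertible, let c, x ∈ ℂⁿ, let w^H := c^H S⁻¹, and set Δμ := μ₊ − μ. Then a vector x₊ ∈ ℂⁿ satisfies the QN3 correction equations S·(x₊ − x) + Δμ·((M(μ₊) − M(μ))/(μ₊ − μ))·x = −M(μ)·x and c^H(x₊ − x) = 0 if and only if w^H M(μ₊) x = 0 and x₊ = x − S⁻¹ M(μ₊) x. (Hence the quasi-Newton method QN3 is equivalent to Neumaier's residual inverse iteration.) -/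
import Mathlib


open Matrix

/-- QN3 is residual inverse iteration: with `S = M σ` invertible,
`wᴴ = cᴴ S⁻¹` and `Δμ = μ₊ − μ ≠ 0`, the QN3 correction equations
`S (x₊ − x) + Δμ ((M μ₊ − M μ)/(μ₊ − μ)) x = −M μ x` and `cᴴ(x₊ − x) = 0` hold iff
`wᴴ M(μ₊) x = 0` and `x₊ = x − S⁻¹ M(μ₊) x`. -/
theorem qn3_is_residual_inverse_iteration (n : ℕ) (hn : 1 ≤ n)
    (M : ℂ → Matrix (Fin n) (Fin n) ℂ) (σ μ μp : ℂ) (hμ : μp ≠ μ)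
    (hS : IsUnit (M σ)) (c x : Fin n → ℂ)
    (w : Fin n → ℂ) (hw : w = star c ᵥ* (M σ)⁻¹)
    (Δμ : ℂ) (hΔμ : Δμ = μp - μ) (xp : Fin n → ℂ) :
    (M σ *ᵥ (xp - x) + Δμ • (((μp - μ)⁻¹ • (M μp - M μ)) *ᵥ x) = -(M μ *ᵥ x) ∧
        star c ⬝ᵥ (xp - x) = 0) ↔
      (w ⬝ᵥ (M μp *ᵥ x) = 0 ∧ xp = x - (M σ)⁻¹ *ᵥ (M μp *ᵥ x)) := by
  have hdet : IsUnit (M σ).det := (Matrix.isUnit_iff_isUnit_det _).mp hS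
  have hsub : μp - μ ≠ 0 := sub_ne_zero.mpr hμ
  have hscale : Δμ • (((μp - μ)⁻¹ • (M μp - M μ)) *ᵥ x) = (M μp - M μ) *ᵥ x := by
    rw [hΔμ, Matrix.smul_mulVec, smul_smul, mul_inv_cancel₀ hsub, one_smul]
  have hinv : ∀ v : Fin n → ℂ, (M σ)⁻¹ *ᵥ (M σ *ᵥ v) = v := by
    intro v
    rw [Matrix.mulVec_mulVec, Matrix.nonsing_inv_mul _ hdet, Matrix.one_mulVec]
  have hinv' : ∀ v : Fin n → ℂ, M σ *ᵥ ((M σ)⁻¹ *ᵥ v) = v := by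
    intro v
    rw [Matrix.mulVec_mulVec, Matrix.mul_nonsing_inv _ hdet, Matrix.one_mulVec]
  have key : (M σ *ᵥ (xp - x) + Δμ • (((μp - μ)⁻¹ • (M μp - M μ)) *ᵥ x) = -(M μ *ᵥ x)) ↔
      xp = x - (M σ)⁻¹ *ᵥ (M μp *ᵥ x) := by
    rw [hscale]
    constructor
    · intro h
      have h2 : M σ *ᵥ (xp - x) = -(M μp *ᵥ x) := by
        rw [Matrix.sub_mulVec] at h
        linear_combination h
      have h3 := congrArg (fun v => (M σ)⁻¹ *ᵥ v) h2
      simp only [hinv] at h3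
      rw [Matrix.mulVec_neg] at h3
      linear_combination h3
    · intro h
      subst h
      have : x - (M σ)⁻¹ *ᵥ (M μp *ᵥ x) - x = -((M σ)⁻¹ *ᵥ (M μp *ᵥ x)) := by
        ring
      rw [this, Matrix.mulVec_neg, hinv', Matrix.sub_mulVec]
      ring
  rw [key]
  constructor
  · rintro ⟨hxp, hc⟩
    refine ⟨?_, hxp⟩
    rw [hxp] at hc
    have : x - (M σ)⁻¹ *ᵥ (M μp *ᵥ x) - x = -((M σ)⁻¹ *ᵥ (M μp *ᵥ x)) := by ring
    rw [this, dotProduct_neg, neg_eq_zero, Matrix.dotProduct_mulVec, ← hw] at hc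
    exact hc
  · rintro ⟨hwx, hxp⟩
    refine ⟨hxp, ?_⟩
    rw [hxp]
    have : x - (M σ)⁻¹ *ᵥ (M μp *ᵥ x) - x = -((M σ)⁻¹ *ᵥ (M μp *ᵥ x)) := by ring
    rw [this, dotProduct_neg, neg_eq_zero, Matrix.dotProduct_mulVec, ← hw]
    exact hwx
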